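/- Let R be a ring with identity, a ∈ R and j_a ∈ J(R). Suppose x is a {2}-inverse of a and y is a {2}-inverse of a + j_a. Then the following are equivalent: (1) x·(a + (a + j_a))·y = x + y = y·(a + (a + j_a))·x; (2) x·(a + (a + j_a))·y = x + y; (3) x·j_a·y = x − y; (4) xR = yR and Rx = Ry; (5) 1 + x·j_a is a unit and y = (1 + x·j_a)⁻¹·x; (6) there exist b, c ∈ R such that x is the (b,c)-inverse of a and y is the (b,c)-inverse of a + j_a. -/

import Mathlib

/-- `y` is the (b,c)-inverse of `a`: `c*a*y = c`, `y*a*b = b`, `y ∈ bR ∩ Rc`. -/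
def IsBCInverse {R : Type*} [Ring R] (a b c y : R) : Prop :=
  c * a * y = c ∧ y * a * b = b ∧ (∃ s, y = b * s) ∧ (∃ t, y = t * c)

/-- In any ring, `1 + j` is a unit when `j` lies in the Jacobson radical. -/
lemma isUnit_one_add_jac {R : Type*} [Ring R] {j : R}
    (hj : j ∈ Ideal.jacobson (⊥ : Ideal R)) : IsUnit (1 + j) := by
  obtain ⟨z, hz⟩ := Ideal.mem_jacobson_iff.1 hj 1
  rw [Ideal.mem_bot] at hz
  have hz1 : z * (1 + j) = 1 := by
    calc z * (1 + j) = z * 1 * j + z - 1 + 1 := by noncomm_ring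
    _ = 1 := by rw [hz, zero_add]
  have hz2 : z - 1 ∈ Ideal.jacobson (⊥ : Ideal R) := by
    have h : z - 1 = (-z) * j := by
      calc z - 1 = -(z * 1 * j) + (z * 1 * j + z - 1) := by noncomm_ring
      _ = -(z * 1 * j) := by rw [hz, add_zero]
      _ = (-z) * j := by noncomm_ring
    rw [h]; exact Ideal.mul_mem_left _ _ hj
  obtain ⟨w, hw⟩ := Ideal.mem_jacobson_iff.1 hz2 1
  rw [Ideal.mem_bot] at hw
  have hw1 : w * z = 1 := by
    calc w * z = w * 1 * (z - 1) + w - 1 + 1 := by noncomm_ring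
    _ = 1 := by rw [hw, zero_add]
  have hwj : 1 + j = w := by
    calc 1 + j = w * z * (1 + j) := by rw [hw1, one_mul]
    _ = w * (z * (1 + j)) := by rw [mul_assoc]
    _ = w := by rw [hz1, mul_one]
  exact ⟨⟨1 + j, z, by rw [hwj]; exact hw1, hz1⟩, rfl⟩

/-- for a {2}-inverse `x` of `a` and a {2}-inverse `y` of `a + j_a`
(`j_a` in the Jacobson radical), the six listed conditions are equivalent. -/
theorem stmt5 {R : Type*} [Ring R] (a ja x y : R)
    (hja : ja ∈ Ideal.jacobson (⊥ : Ideal R))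
    (hx : x * a * x = x) (hy : y * (a + ja) * y = y) :
    List.TFAE
      [ x * (a + (a + ja)) * y = x + y ∧ x + y = y * (a + (a + ja)) * x,
        x * (a + (a + ja)) * y = x + y,
        x * ja * y = x - y,
        ({z : R | ∃ r, z = x * r} = {z : R | ∃ r, z = y * r} ∧
          {z : R | ∃ r, z = r * x} = {z : R | ∃ r, z = r * y}),
        IsUnit (1 + x * ja) ∧ y = Ring.inverse (1 + x * ja) * x,
        ∃ b c, IsBCInverse a b c x ∧ IsBCInverse (a + ja) b c y ] := by
  have hu : IsUnit (1 + x * ja) := isUnit_one_add_jac (Ideal.mul_mem_left _ x hja)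
  have hv : IsUnit (1 + ja * x) := by
    exact isUnit_one_add_jac (Ideal.mul_mem_right x _ hja)
  tfae_have 1 → 2 := fun h => h.1
  tfae_have 2 → 3 := by
    intro h2
    have key : x * a * (x * (a + (a + ja)) * y) = x * (a + (a + ja)) * y := by
      calc x * a * (x * (a + (a + ja)) * y) = (x * a * x) * ((a + (a + ja)) * y) := by
            noncomm_ring
      _ = x * ((a + (a + ja)) * y) := by rw [hx]
      _ = x * (a + (a + ja)) * y := by rw [mul_assoc]
    rw [h2] at key
    have hxay : x * a * y = y := by
      have h' : x * a * (x + y) = x + x * a * y := by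
        calc x * a * (x + y) = x * a * x + x * a * y := by noncomm_ring
        _ = x + x * a * y := by rw [hx]
      rw [h'] at key
      exact add_left_cancel key
    have hsplit : x * (a + (a + ja)) * y = x * a * y + x * (a + ja) * y := by noncomm_ring
    have h3 : x * (a + ja) * y = x := by
      have := h2
      rw [hsplit, hxay] at this
      -- this : y + x * (a + ja) * y = x + y
      have h'' : x * (a + ja) * y + y = x + y := by rw [add_comm] at this; exact this
      exact add_right_cancel h''
    have : x * (a + ja) * y = x * a * y + x * ja * y := by noncomm_ring
    rw [h3, hxay] at this
    -- this : x = y + x * ja * y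
    exact eq_sub_of_add_eq (by rw [add_comm]; exact this.symm)
  tfae_have 3 → 5 := by
    intro h3
    have hux : (1 + x * ja) * y = x := by
      calc (1 + x * ja) * y = y + x * ja * y := by noncomm_ring
      _ = y + (x - y) := by rw [h3]
      _ = x := by noncomm_ring
    refine ⟨hu, ?_⟩
    have h' : Ring.inverse (1 + x * ja) * ((1 + x * ja) * y) = Ring.inverse (1 + x * ja) * x := by
      rw [hux]
    rw [← mul_assoc, Ring.inverse_mul_cancel _ hu, one_mul] at h'
    exact h'
  -- common consequences of (5)
  have pack : (IsUnit (1 + x * ja) ∧ y = Ring.inverse (1 + x * ja) * x) →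
      ((1 + x * ja) * y = x ∧ y * (1 + ja * x) = x ∧ x * Ring.inverse (1 + ja * x) = y) := by
    rintro ⟨-, hy5⟩
    have hux : (1 + x * ja) * y = x := by
      rw [hy5, ← mul_assoc, Ring.mul_inverse_cancel _ hu, one_mul]
    have hcomm : (1 + x * ja) * x = x * (1 + ja * x) := by noncomm_ring
    have hyv : y * (1 + ja * x) = x := by
      calc y * (1 + ja * x) = Ring.inverse (1 + x * ja) * (x * (1 + ja * x)) := by
            rw [hy5, mul_assoc]
      _ = Ring.inverse (1 + x * ja) * ((1 + x * ja) * x) := by rw [hcomm]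
      _ = x := by rw [← mul_assoc, Ring.inverse_mul_cancel _ hu, one_mul]
    have hxv : x * Ring.inverse (1 + ja * x) = y := by
      have h' : (y * (1 + ja * x)) * Ring.inverse (1 + ja * x) = x * Ring.inverse (1 + ja * x) :=
        by rw [hyv]
      rw [mul_assoc, Ring.mul_inverse_cancel _ hv, mul_one] at h'
      exact h'.symm
    exact ⟨hux, hyv, hxv⟩
  tfae_have 5 → 4 := by
    intro h5
    obtain ⟨hux, hyv, hxv⟩ := pack h5
    constructor
    · ext z
      constructor
      · rintro ⟨r, rfl⟩
        exact ⟨(1 + ja * x) * r, by rw [← mul_assoc, hyv]⟩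
      · rintro ⟨r, rfl⟩
        exact ⟨Ring.inverse (1 + ja * x) * r, by rw [← mul_assoc, hxv]⟩
    · ext z
      constructor
      · rintro ⟨r, rfl⟩
        exact ⟨r * (1 + x * ja), by rw [mul_assoc, hux]⟩
      · rintro ⟨r, rfl⟩
        exact ⟨r * Ring.inverse (1 + x * ja), by rw [mul_assoc, ← h5.2]⟩
  tfae_have 5 → 6 := by
    intro h5
    obtain ⟨hux, hyv, hxv⟩ := pack h5
    refine ⟨x, x, ⟨hx, hx, ⟨a * x, by rw [← mul_assoc, hx]⟩, ⟨x * a, hx.symm⟩⟩, ?_, ?_, ?_, ?_⟩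
    · -- x * (a + ja) * y = x
      calc x * (a + ja) * y = ((1 + x * ja) * y) * (a + ja) * y := by rw [hux]
      _ = (1 + x * ja) * (y * (a + ja) * y) := by noncomm_ring
      _ = (1 + x * ja) * y := by rw [hy]
      _ = x := hux
    · -- y * (a + ja) * x = x
      have hxjax : x * (a + ja) * x = (1 + x * ja) * x := by
        have h' : x * (a + ja) * x = x * a * x + x * ja * x := by noncomm_ring
        rw [h', hx]; noncomm_ring
      calc y * (a + ja) * x
          = Ring.inverse (1 + x * ja) * (x * (a + ja) * x) := by rw [h5.2]; noncomm_ring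
      _ = Ring.inverse (1 + x * ja) * ((1 + x * ja) * x) := by rw [hxjax]
      _ = x := by rw [← mul_assoc, Ring.inverse_mul_cancel _ hu, one_mul]
    · exact ⟨Ring.inverse (1 + ja * x), hxv.symm⟩
    · exact ⟨Ring.inverse (1 + x * ja), h5.2⟩
  tfae_have 6 → 4 := by
    rintro ⟨b, c, ⟨hcax, hxab, ⟨s, hxs⟩, ⟨t, hxt⟩⟩, hcay, hyab, ⟨s', hys⟩, ⟨t', hyt⟩⟩
    constructor
    · ext z
      constructor
      · rintro ⟨r, rfl⟩
        refine ⟨(a + ja) * (b * (s * r)), ?_⟩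
        calc x * r = (b * s) * r := by rw [hxs]
        _ = (y * (a + ja) * b) * (s * r) := by rw [hyab, mul_assoc]
        _ = y * ((a + ja) * (b * (s * r))) := by noncomm_ring
      · rintro ⟨r, rfl⟩
        refine ⟨a * (b * (s' * r)), ?_⟩
        calc y * r = (b * s') * r := by rw [hys]
        _ = (x * a * b) * (s' * r) := by rw [hxab, mul_assoc]
        _ = x * (a * (b * (s' * r))) := by noncomm_ring
    · ext z
      constructor
      · rintro ⟨r, rfl⟩
        refine ⟨(r * t) * (c * (a + ja)), ?_⟩
        calc r * x = r * (t * c) := by rw [hxt]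
        _ = (r * t) * (c * (a + ja) * y) := by rw [hcay, mul_assoc]
        _ = ((r * t) * (c * (a + ja))) * y := by noncomm_ring
      · rintro ⟨r, rfl⟩
        refine ⟨(r * t') * (c * a), ?_⟩
        calc r * y = r * (t' * c) := by rw [hyt]
        _ = (r * t') * (c * a * x) := by rw [hcax, mul_assoc]
        _ = ((r * t') * (c * a)) * x := by noncomm_ring
  tfae_have 4 → 1 := by
    rintro ⟨h41, h42⟩
    have hyX : ∃ r, y = x * r := by
      have hmem : y ∈ {z : R | ∃ r, z = y * r} := ⟨(a + ja) * y, by rw [← mul_assoc, hy]⟩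
      rw [← h41] at hmem
      exact hmem
    have hxY : ∃ r, x = y * r := by
      have hmem : x ∈ {z : R | ∃ r, z = x * r} := ⟨a * x, by rw [← mul_assoc, hx]⟩
      rw [h41] at hmem
      exact hmem
    have hxRy : ∃ r, x = r * y := by
      have hmem : x ∈ {z : R | ∃ r, z = r * x} := ⟨x * a, hx.symm⟩
      rw [h42] at hmem
      exact hmem
    have hyRx : ∃ r, y = r * x := by
      have hmem : y ∈ {z : R | ∃ r, z = r * y} := ⟨y * (a + ja), hy.symm⟩
      rw [← h42] at hmem
      exact hmem
    obtain ⟨r1, hr1⟩ := hyX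
    have e1 : x * a * y = y := by rw [hr1, ← mul_assoc, hx]
    obtain ⟨r2, hr2⟩ := hxY
    have e2 : y * (a + ja) * x = x := by rw [hr2, ← mul_assoc, hy]
    obtain ⟨r3, hr3⟩ := hxRy
    have e3 : x * (a + ja) * y = x := by rw [hr3, mul_assoc r3, mul_assoc r3, hy]
    obtain ⟨r4, hr4⟩ := hyRx
    have e4 : y * a * x = y := by rw [hr4, mul_assoc r4, mul_assoc r4, hx]
    constructor
    · have hsplit : x * (a + (a + ja)) * y = x * a * y + x * (a + ja) * y := by noncomm_ring
      rw [hsplit, e1, e3, add_comm]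
    · have hsplit : y * (a + (a + ja)) * x = y * a * x + y * (a + ja) * x := by noncomm_ring
      rw [hsplit, e4, e2, add_comm]
  tfae_finish
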